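/- Let L ≥ 1, m_ℓ ≥ 1 for ℓ ∈ [L], U > 0, ε > 0. For every admissible clipping strategy {a_j^{(ℓ)}, b_j^{(ℓ)}} there exists an admissible clipping strategy {a'_j^{(ℓ)}, b'_j^{(ℓ)}} satisfying a'_j^{(ℓ)} + b'_j^{(ℓ)} = U for all ℓ ∈ [L], j ∈ [m_ℓ], such that E^{(1)}({a'_j^{(ℓ)}, b'_j^{(ℓ)}}) ≤ E^{(1)}({a_j^{(ℓ)}, b_j^{(ℓ)}}). Consequently, the minimum of E^{(1)} over all admissible strategies is attained by a strategy with a_j^{(ℓ)} + b_j^{(ℓ)} = U for all ℓ, j. -/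

import Mathlib

open Finset

noncomputable def kthLargest {L : ℕ} (v : Fin L → ℝ) (k : ℕ) : ℝ :=
  (((Finset.univ.val.map v).sort (· ≤ ·)).reverse).getD (k - 1) 0

/-- An admissible clipping strategy: `0 ≤ a ℓ j ≤ b ℓ j ≤ U` for every user `ℓ`
and sample index `j`. -/
def Admissible {L : ℕ} (m : Fin L → ℕ) (U : ℝ)
    (a b : (ℓ : Fin L) → Fin (m ℓ) → ℝ) : Prop :=
  ∀ ℓ j, 0 ≤ a ℓ j ∧ a ℓ j ≤ b ℓ j ∧ b ℓ j ≤ U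

/-- The worst-case error functional `E^(1)` of a clipping strategy (dimension `d = 1`). -/
noncomputable def E1 {L : ℕ} (m : Fin L → ℕ) (U ε : ℝ)
    (a b : (ℓ : Fin L) → Fin (m ℓ) → ℝ) : ℝ :=
  (1 / ∑ ℓ, (m ℓ : ℝ)) *
    ((∑ ℓ, ∑ j, max (a ℓ j) (U - b ℓ j)) +
      (1 / ε) * sSup (Set.range fun ℓ => ∑ j, (b ℓ j - a ℓ j)))

lemma csSup_range_eq_sup' {L : ℕ} (hL : 0 < L) (f : Fin L → ℝ) :
    sSup (Set.range f) = Finset.univ.sup' ⟨⟨0, hL⟩, Finset.mem_univ _⟩ f := by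
  have h := Finset.sup'_eq_csSup_image (s := Finset.univ) (H := ⟨⟨0, hL⟩, Finset.mem_univ _⟩) f
  rw [Finset.coe_univ, Set.image_univ] at h
  exact h.symm

lemma E1_eq {L : ℕ} (hL : 0 < L) (m : Fin L → ℕ) (U ε : ℝ)
    (a b : (ℓ : Fin L) → Fin (m ℓ) → ℝ) :
    E1 m U ε a b = (1 / ∑ ℓ, (m ℓ : ℝ)) *
      ((∑ ℓ, ∑ j, max (a ℓ j) (U - b ℓ j)) +
        (1 / ε) * Finset.univ.sup' ⟨⟨0, hL⟩, Finset.mem_univ _⟩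
          (fun ℓ => ∑ j, (b ℓ j - a ℓ j))) := by
  rw [E1, csSup_range_eq_sup' hL]

set_option maxHeartbeats 800000 in
/-- Lemma 5 of the paper, case `d = 1`.
Every admissible clipping strategy is dominated by an admissible strategy with
`a_j^{(ℓ)} + b_j^{(ℓ)} = U` everywhere; consequently the minimum of `E^(1)` is attained
by such a strategy. -/
theorem stmt4 {L : ℕ} (hL : 0 < L) (m : Fin L → ℕ) (hm : ∀ ℓ, 1 ≤ m ℓ)
    (U ε : ℝ) (hU : 0 < U) (hε : 0 < ε) :
    (∀ a b, Admissible m U a b →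
      ∃ a' b', Admissible m U a' b' ∧ (∀ ℓ j, a' ℓ j + b' ℓ j = U) ∧
        E1 m U ε a' b' ≤ E1 m U ε a b) ∧
    (∃ a b, Admissible m U a b ∧ (∀ ℓ j, a ℓ j + b ℓ j = U) ∧
      ∀ a' b', Admissible m U a' b' → E1 m U ε a b ≤ E1 m U ε a' b') := by
  have hne : (Finset.univ : Finset (Fin L)).Nonempty := ⟨⟨0, hL⟩, Finset.mem_univ _⟩
  -- Part 1
  have part1 : ∀ a b, Admissible m U a b →
      ∃ a' b', Admissible m U a' b' ∧ (∀ ℓ j, a' ℓ j + b' ℓ j = U) ∧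
        E1 m U ε a' b' ≤ E1 m U ε a b := by
    intro a b hab
    set a' : (ℓ : Fin L) → Fin (m ℓ) → ℝ :=
      fun ℓ j => min (max (a ℓ j) (U - b ℓ j)) (U / 2) with ha'
    set b' : (ℓ : Fin L) → Fin (m ℓ) → ℝ := fun ℓ j => U - a' ℓ j with hb'
    have ha'nonneg : ∀ ℓ j, 0 ≤ a' ℓ j := fun ℓ j =>
      le_min (le_max_of_le_left (hab ℓ j).1) (by linarith)
    have ha'half : ∀ ℓ j, a' ℓ j ≤ U / 2 := fun ℓ j => min_le_right _ _
    have ha'lb : ∀ ℓ j, (a ℓ j + (U - b ℓ j)) / 2 ≤ a' ℓ j := by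
      intro ℓ j
      refine le_min ?_ ?_
      · have := le_max_left (a ℓ j) (U - b ℓ j)
        have := le_max_right (a ℓ j) (U - b ℓ j)
        linarith
      · have := (hab ℓ j).2.1
        linarith
    have ha'ub : ∀ ℓ j, a' ℓ j ≤ max (a ℓ j) (U - b ℓ j) := fun ℓ j => min_le_left _ _
    refine ⟨a', b', ?_, ?_, ?_⟩
    · intro ℓ j
      refine ⟨ha'nonneg ℓ j, ?_, ?_⟩
      · have := ha'half ℓ j; simp only [hb']; linarith
      · have := ha'nonneg ℓ j; simp only [hb']; linarith
    · intro ℓ j; simp [hb']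
    · rw [E1_eq hL, E1_eq hL]
      have hMpos : (0:ℝ) ≤ 1 / ∑ ℓ, (m ℓ : ℝ) := by
        positivity
      refine mul_le_mul_of_nonneg_left ?_ hMpos
      refine add_le_add ?_ ?_
      · refine Finset.sum_le_sum fun ℓ _ => Finset.sum_le_sum fun j _ => ?_
        have h1 : U - b' ℓ j = a' ℓ j := by simp [hb']
        rw [h1, max_self]
        exact ha'ub ℓ j
      · refine mul_le_mul_of_nonneg_left ?_ (by positivity)
        refine Finset.sup'_le _ _ fun ℓ _ => ?_
        refine le_trans ?_ (Finset.le_sup' (fun ℓ => ∑ j, (b ℓ j - a ℓ j))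
          (Finset.mem_univ ℓ))
        refine Finset.sum_le_sum fun j _ => ?_
        have := ha'lb ℓ j
        simp only [hb']
        linarith
  refine ⟨part1, ?_⟩
  -- Part 2 : existence of a minimizer, by compactness
  let X := (ℓ : Fin L) → Fin (m ℓ) → ℝ
  set K : Set (X × X) := {p | Admissible m U p.1 p.2} with hKdef
  have hKeq : K = ((Set.univ.pi fun ℓ => Set.univ.pi fun _ : Fin (m ℓ) => Set.Icc (0:ℝ) U) ×ˢ
      (Set.univ.pi fun ℓ => Set.univ.pi fun _ : Fin (m ℓ) => Set.Icc (0:ℝ) U)) ∩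
      ⋂ ℓ, ⋂ j, {p : X × X | p.1 ℓ j ≤ p.2 ℓ j} := by
    ext p
    simp only [hKdef, Set.mem_setOf_eq, Set.mem_inter_iff, Set.mem_prod, Set.mem_pi,
      Set.mem_univ, true_implies, Set.mem_Icc, Set.mem_iInter, Admissible]
    constructor
    · intro h
      refine ⟨⟨fun ℓ j => ⟨(h ℓ j).1, le_trans (h ℓ j).2.1 (h ℓ j).2.2⟩,
          fun ℓ j => ⟨le_trans (h ℓ j).1 (h ℓ j).2.1, (h ℓ j).2.2⟩⟩, fun ℓ j => (h ℓ j).2.1⟩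
    · rintro ⟨⟨h1, h2⟩, h3⟩ ℓ j
      exact ⟨(h1 ℓ j).1, h3 ℓ j, (h2 ℓ j).2⟩
  have hKcomp : IsCompact K := by
    rw [hKeq]
    refine IsCompact.inter_right ?_ ?_
    · exact ((isCompact_univ_pi fun ℓ => isCompact_univ_pi fun _ => isCompact_Icc).prod
        (isCompact_univ_pi fun ℓ => isCompact_univ_pi fun _ => isCompact_Icc))
    · refine isClosed_iInter fun ℓ => isClosed_iInter fun j => isClosed_le ?_ ?_
      · exact (continuous_apply j).comp ((continuous_apply ℓ).comp continuous_fst)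
      · exact (continuous_apply j).comp ((continuous_apply ℓ).comp continuous_snd)
  have hKne : K.Nonempty := by
    refine ⟨⟨fun _ _ => 0, fun _ _ => 0⟩, fun ℓ j => ⟨le_refl _, le_refl _, le_of_lt hU⟩⟩
  have hcont : Continuous fun p : X × X => E1 m U ε p.1 p.2 := by
    have : (fun p : X × X => E1 m U ε p.1 p.2) =
        fun p : X × X => (1 / ∑ ℓ, (m ℓ : ℝ)) *
          ((∑ ℓ, ∑ j, max (p.1 ℓ j) (U - p.2 ℓ j)) +
            (1 / ε) * Finset.univ.sup' hne
              (fun ℓ => ∑ j, (p.2 ℓ j - p.1 ℓ j))) := by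
      funext p
      exact E1_eq hL m U ε p.1 p.2
    rw [this]
    refine continuous_const.mul (Continuous.add ?_ (continuous_const.mul ?_))
    · refine continuous_finset_sum _ fun ℓ _ => continuous_finset_sum _ fun j _ => ?_
      exact Continuous.max
        ((continuous_apply j).comp ((continuous_apply ℓ).comp continuous_fst))
        (continuous_const.sub
          ((continuous_apply j).comp ((continuous_apply ℓ).comp continuous_snd)))
    · refine Continuous.finset_sup'_apply hne fun ℓ _ => ?_
      refine continuous_finset_sum _ fun j _ => Continuous.sub ?_ ?_
      · exact (continuous_apply j).comp ((continuous_apply ℓ).comp continuous_snd)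
      · exact (continuous_apply j).comp ((continuous_apply ℓ).comp continuous_fst)
  obtain ⟨p0, hp0K, hp0min⟩ := hKcomp.exists_isMinOn hKne hcont.continuousOn
  have hadp0 : Admissible m U p0.1 p0.2 := by rw [hKdef] at hp0K; exact hp0K
  obtain ⟨a', b', hadm, hsum, hle⟩ := part1 p0.1 p0.2 hadp0
  refine ⟨a', b', hadm, hsum, fun a'' b'' h'' => le_trans hle ?_⟩
  have hmem : (⟨a'', b''⟩ : X × X) ∈ K := by rw [hKdef]; exact h''
  exact isMinOn_iff.mp hp0min _ hmem
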